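/- Fix Δ* > 0, η ∈ (0,1), N₂ ∈ ℕ, and let ϑ > 0. Then there exist N₁(ϑ) ∈ ℕ, Δ₀ ≥ Δ*, and constants γ_y > 0, γ_λ > 0 such that for every N₁ ≥ N₁(ϑ), every Δ ≥ Δ₀, and every n ∈ {1,…,⌊η·N₁⌋}: |𝒦_y(n)| ≤ γ_y·exp(−ϑ·Δ) and |𝒦_λ(n)| ≤ (γ_λ/Δ)·exp(−ϑ·Δ). -/

import Mathlib

/-- The nodes `φ_n = exp(-Δ·λ_n)`. -/
noncomputable def phi (lam : ℕ → ℝ) (Δ : ℝ) (n : ℕ) : ℝ := Real.exp (-Δ * lam n)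

/-- Lagrange basis polynomial `L_n(z)` on the nodes `φ_1, …, φ_{N₁}`. -/
noncomputable def Lag (lam : ℕ → ℝ) (Δ : ℝ) (N₁ n : ℕ) (z : ℝ) : ℝ :=
  ∏ j ∈ (Finset.Icc 1 N₁).erase n, (z - phi lam Δ j) / (phi lam Δ n - phi lam Δ j)

/-- `L_n'(φ_n) = Σ_{k ≤ N₁, k ≠ n} 1/(φ_n − φ_k)`. -/
noncomputable def LagD (lam : ℕ → ℝ) (Δ : ℝ) (N₁ n : ℕ) : ℝ :=
  ∑ k ∈ (Finset.Icc 1 N₁).erase n, 1 / (phi lam Δ n - phi lam Δ k)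

/-- Hermite basis polynomial `H_n(z) = (1 − 2(z − φ_n)L_n'(φ_n))·L_n(z)²`. -/
noncomputable def HermH (lam : ℕ → ℝ) (Δ : ℝ) (N₁ n : ℕ) (z : ℝ) : ℝ :=
  (1 - 2 * (z - phi lam Δ n) * LagD lam Δ N₁ n) * (Lag lam Δ N₁ n z) ^ 2

/-- Hermite basis polynomial `H̃_n(z) = (z − φ_n)·L_n(z)²`. -/
noncomputable def HermHt (lam : ℕ → ℝ) (Δ : ℝ) (N₁ n : ℕ) (z : ℝ) : ℝ :=
  (z - phi lam Δ n) * (Lag lam Δ N₁ n z) ^ 2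

/-- First-order condition number for the amplitudes:
`𝒦_y(n) = Σ_{m=N₁+1}^{N₁+N₂} y_m·H_n(φ_m)`. -/
noncomputable def Ky (lam y : ℕ → ℝ) (Δ : ℝ) (N₁ N₂ n : ℕ) : ℝ :=
  ∑ m ∈ Finset.Icc (N₁ + 1) (N₁ + N₂), y m * HermH lam Δ N₁ n (phi lam Δ m)

/-- First-order condition number for the exponents:
`𝒦_λ(n) = −(Δ·y_n·φ_n)⁻¹·Σ_{m=N₁+1}^{N₁+N₂} y_m·H̃_n(φ_m)`. -/
noncomputable def Kl (lam y : ℕ → ℝ) (Δ : ℝ) (N₁ N₂ n : ℕ) : ℝ :=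
  -(Δ * y n * phi lam Δ n)⁻¹ *
    ∑ m ∈ Finset.Icc (N₁ + 1) (N₁ + N₂), y m * HermHt lam Δ N₁ n (phi lam Δ m)

lemma phi_pos' (lam : ℕ → ℝ) (Δ : ℝ) (n : ℕ) : 0 < phi lam Δ n := Real.exp_pos _

lemma aux_sum' (n M : ℕ) : M * M ≤ 2 * ∑ j ∈ Finset.Icc (n+1) (n+M), (j - n) := by
  induction M with
  | zero => simp
  | succ M ih =>
    rw [show n + (M+1) = (n+M)+1 by ring, Finset.sum_Icc_succ_top (by omega)]
    have h2 : n + M + 1 - n = M + 1 := by omega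
    rw [h2]
    nlinarith [ih]

lemma phi_le_mul' {lam : ℕ → ℝ} {υ Δ : ℝ} (hΔ : 0 < Δ) (hυ : 0 < υ) {a b : ℕ}
    (ha : 1 ≤ a) (hab : a < b)
    (hg : υ * ((b:ℝ)^2 - (a:ℝ)^2) ≤ lam b - lam a) :
    phi lam Δ b ≤ phi lam Δ a * Real.exp (-(υ*Δ)) ^ (b - a) := by
  rw [phi, phi, ← Real.exp_nat_mul, ← Real.exp_add, Real.exp_le_exp]
  have hcast : ((b - a : ℕ) : ℝ) = (b:ℝ) - a := by
    rw [Nat.cast_sub hab.le]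
  rw [hcast]
  have h1 : (1:ℝ) ≤ a := by exact_mod_cast ha
  have h2 : (a:ℝ) + 1 ≤ b := by exact_mod_cast hab
  nlinarith [mul_le_mul_of_nonneg_left hg hΔ.le, mul_pos hυ hΔ,
    mul_nonneg (mul_nonneg hυ.le hΔ.le) (by nlinarith : (0:ℝ) ≤ ((b:ℝ)^2 - (a:ℝ)^2) - ((b:ℝ) - a))]

lemma phi_half' {lam : ℕ → ℝ} {υ Δ : ℝ} (hΔ : 0 < Δ) (hυ : 0 < υ) {a b : ℕ}
    (ha : 1 ≤ a) (hab : a < b)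
    (hg : υ * ((b:ℝ)^2 - (a:ℝ)^2) ≤ lam b - lam a)
    (hq : Real.exp (-(υ*Δ)) ≤ 1/2) :
    phi lam Δ b ≤ phi lam Δ a / 2 := by
  have h := phi_le_mul' hΔ hυ ha hab hg
  have hqpow : Real.exp (-(υ*Δ)) ^ (b-a) ≤ 1/2 := by
    calc Real.exp (-(υ*Δ)) ^ (b-a) ≤ Real.exp (-(υ*Δ)) ^ 1 :=
          pow_le_pow_of_le_one (Real.exp_pos _).le (by linarith) (by omega)
      _ = Real.exp (-(υ*Δ)) := pow_one _
      _ ≤ 1/2 := hq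
  nlinarith [phi_pos' lam Δ a, pow_nonneg (Real.exp_pos (-(υ*Δ))).le (b-a)]

/-- Core bound on the squared Lagrange polynomial. -/
lemma lag_sq_bound' {lam : ℕ → ℝ} {υ Δ ϑ : ℝ} (hΔ : 0 < Δ) (hυ : 0 < υ)
    (hq : Real.exp (-(υ*Δ)) ≤ 1/2) (h20 : Real.exp (-Δ) ≤ 1/20)
    (hgapl : ∀ a b : ℕ, 1 ≤ a → a ≤ b → υ * ((b:ℝ)^2 - (a:ℝ)^2) ≤ lam b - lam a)
    {N₁ n m : ℕ} (hn : 1 ≤ n) (hnN₁ : n < N₁) (hm : N₁ + 1 ≤ m)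
    (hexp : (N₁:ℝ) + ϑ ≤ υ * ((N₁ - n : ℕ):ℝ)^2) :
    (Lag lam Δ N₁ n (phi lam Δ m))^2 ≤ (1/5:ℝ)^N₁ * Real.exp (-ϑ*Δ) := by
  classical
  set q : ℝ := Real.exp (-(υ*Δ)) with hqdef
  have hq0 : 0 ≤ q := (Real.exp_pos _).le
  set E := (Finset.Icc 1 N₁).erase n with hE
  have hfac : ∀ j ∈ E,
      |(phi lam Δ m - phi lam Δ j) / (phi lam Δ n - phi lam Δ j)| ≤ 2 * q ^ (j - n) := by
    intro j hj
    obtain ⟨hjn, hjIcc⟩ := Finset.mem_erase.mp hj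
    obtain ⟨hj1, hjN₁⟩ := Finset.mem_Icc.mp hjIcc
    have hjm : j < m := by omega
    have hnum : |phi lam Δ m - phi lam Δ j| ≤ phi lam Δ j := by
      have h1 := phi_half' hΔ hυ hj1 hjm (hgapl j m hj1 hjm.le) hq
      rw [abs_of_nonpos (by linarith [phi_pos' lam Δ m, phi_pos' lam Δ j])]
      linarith [phi_pos' lam Δ m]
    rw [abs_div]
    rcases hjn.lt_or_gt with hlt | hgt
    · have hhalf := phi_half' hΔ hυ hj1 hlt (hgapl j n hj1 hlt.le) hq
      have hd : phi lam Δ j / 2 ≤ |phi lam Δ n - phi lam Δ j| := by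
        rw [abs_of_nonpos (by linarith [phi_pos' lam Δ j])]
        linarith
      have hsub : j - n = 0 := Nat.sub_eq_zero_of_le hlt.le
      rw [hsub, pow_zero, mul_one]
      calc |phi lam Δ m - phi lam Δ j| / |phi lam Δ n - phi lam Δ j|
          ≤ phi lam Δ j / (phi lam Δ j / 2) :=
            div_le_div₀ (phi_pos' lam Δ j).le hnum (by linarith [phi_pos' lam Δ j]) hd
        _ = 2 := by
            rw [div_div_eq_mul_div, mul_comm, mul_div_assoc,
              div_self (phi_pos' lam Δ j).ne', mul_one]
    · have hhalf := phi_half' hΔ hυ hn hgt (hgapl n j hn hgt.le) hq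
      have hd : phi lam Δ n / 2 ≤ |phi lam Δ n - phi lam Δ j| := by
        rw [abs_of_nonneg (by linarith [phi_pos' lam Δ n])]
        linarith
      have hnum2 : |phi lam Δ m - phi lam Δ j| ≤ phi lam Δ n * q ^ (j - n) := by
        calc |phi lam Δ m - phi lam Δ j| ≤ phi lam Δ j := hnum
          _ ≤ phi lam Δ n * q ^ (j - n) := phi_le_mul' hΔ hυ hn hgt (hgapl n j hn hgt.le)
      calc |phi lam Δ m - phi lam Δ j| / |phi lam Δ n - phi lam Δ j|
          ≤ (phi lam Δ n * q ^ (j - n)) / (phi lam Δ n / 2) :=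
            div_le_div₀ (mul_nonneg (phi_pos' lam Δ n).le (pow_nonneg hq0 _)) hnum2
              (by linarith [phi_pos' lam Δ n]) hd
        _ = 2 * q ^ (j - n) := by
            field_simp [(phi_pos' lam Δ n).ne']
  set T : ℕ := ∑ j ∈ E, (j - n) with hT
  have hcard : E.card ≤ N₁ := by
    calc E.card ≤ (Finset.Icc 1 N₁).card := Finset.card_le_card (Finset.erase_subset _ _)
      _ = N₁ := by rw [Nat.card_Icc]; omega
  have hLagAbs : |Lag lam Δ N₁ n (phi lam Δ m)| ≤ 2^N₁ * q^T := by
    rw [Lag, Finset.abs_prod]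
    calc ∏ j ∈ E, |(phi lam Δ m - phi lam Δ j) / (phi lam Δ n - phi lam Δ j)|
        ≤ ∏ j ∈ E, (2 * q ^ (j - n)) :=
          Finset.prod_le_prod (fun j _ => abs_nonneg _) hfac
      _ = 2 ^ E.card * q ^ T := by
          rw [Finset.prod_mul_distrib, Finset.prod_const, Finset.prod_pow_eq_pow_sum]
      _ ≤ 2^N₁ * q^T := by
          apply mul_le_mul_of_nonneg_right _ (pow_nonneg hq0 _)
          exact pow_le_pow_right₀ one_le_two hcard
  have hsumT : (N₁ - n) * (N₁ - n) ≤ 2 * T := by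
    have hsub : Finset.Icc (n+1) N₁ ⊆ E := by
      intro j hj
      rw [Finset.mem_Icc] at hj
      rw [hE, Finset.mem_erase, Finset.mem_Icc]
      omega
    have h1 : ∑ j ∈ Finset.Icc (n+1) N₁, (j - n) ≤ T :=
      Finset.sum_le_sum_of_subset hsub
    have h2 := aux_sum' n (N₁ - n)
    rw [show n + (N₁ - n) = N₁ by omega] at h2
    omega
  have habs : (Lag lam Δ N₁ n (phi lam Δ m))^2 = |Lag lam Δ N₁ n (phi lam Δ m)|^2 :=
    (sq_abs _).symm
  rw [habs]
  have hqT : (q^T)^2 = Real.exp (((2*T : ℕ):ℝ) * (-(υ*Δ))) := by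
    rw [Real.exp_nat_mul, hqdef]
    rw [← pow_mul]
    ring_nf
  have hstep1 : |Lag lam Δ N₁ n (phi lam Δ m)|^2 ≤ (2^N₁)^2 * (q^T)^2 := by
    rw [← mul_pow]
    exact pow_le_pow_left₀ (abs_nonneg _) hLagAbs 2
  have hstep2 : Real.exp (((2*T : ℕ):ℝ) * (-(υ*Δ))) ≤ Real.exp (-((N₁:ℝ)+ϑ)*Δ) := by
    apply Real.exp_le_exp.mpr
    have hTc : ((N₁ - n : ℕ):ℝ) * ((N₁ - n : ℕ):ℝ) ≤ ((2*T : ℕ):ℝ) := by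
      exact_mod_cast hsumT
    have h3 : (N₁:ℝ) + ϑ ≤ υ * ((2*T:ℕ):ℝ) := by nlinarith [hexp]
    nlinarith [h3, hΔ]
  have hstep3 : Real.exp (-((N₁:ℝ)+ϑ)*Δ) = Real.exp (-Δ)^N₁ * Real.exp (-ϑ*Δ) := by
    rw [← Real.exp_nat_mul, ← Real.exp_add]
    ring_nf
  calc |Lag lam Δ N₁ n (phi lam Δ m)|^2 ≤ (2^N₁)^2 * (q^T)^2 := hstep1
    _ ≤ (2^N₁)^2 * Real.exp (-((N₁:ℝ)+ϑ)*Δ) := by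
        rw [hqT]
        exact mul_le_mul_of_nonneg_left hstep2 (by positivity)
    _ = (4 * Real.exp (-Δ))^N₁ * Real.exp (-ϑ*Δ) := by
        rw [hstep3]
        have h4 : ((2:ℝ)^N₁)^2 = 4^N₁ := by
          rw [← pow_mul, show (4:ℝ) = 2^2 by norm_num, ← pow_mul, mul_comm]
        rw [h4, mul_pow]
        ring
    _ ≤ (1/5:ℝ)^N₁ * Real.exp (-ϑ*Δ) := by
        apply mul_le_mul_of_nonneg_right _ (Real.exp_pos _).le
        apply pow_le_pow_left₀ (by positivity)
        linarith

set_option maxHeartbeats 1000000 in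
theorem stmt3 (lam y : ℕ → ℝ) (υ Υ ℓ Δs η ϑ : ℝ) (N₂ : ℕ)
    (hυ : 0 < υ) (hυΥ : υ ≤ Υ)
    (hmono : ∀ n m : ℕ, 1 ≤ n → n < m → lam n < lam m)
    (hgap : ∀ n m : ℕ, 1 ≤ n → n ≤ m →
      υ * ((m : ℝ) ^ 2 - (n : ℝ) ^ 2) ≤ lam m - lam n ∧
      lam m - lam n ≤ Υ * ((m : ℝ) ^ 2 - (n : ℝ) ^ 2))
    (hℓ : 1 < ℓ) (hy : ∀ n : ℕ, 1 ≤ n → ℓ⁻¹ ≤ |y n| ∧ |y n| ≤ ℓ)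
    (hΔs : 0 < Δs) (hη : 0 < η) (hη1 : η < 1) (hN₂ : 1 ≤ N₂) (hϑ : 0 < ϑ) :
    ∃ Nϑ : ℕ, ∃ Δ₀ : ℝ, Δs ≤ Δ₀ ∧
      ∃ γy γl : ℝ, 0 < γy ∧ 0 < γl ∧
        ∀ N₁ : ℕ, Nϑ ≤ N₁ → ∀ Δ : ℝ, Δ₀ ≤ Δ →
          ∀ n : ℕ, 1 ≤ n → n ≤ ⌊η * (N₁ : ℝ)⌋₊ →
            |Ky lam y Δ N₁ N₂ n| ≤ γy * Real.exp (-ϑ * Δ) ∧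
            |Kl lam y Δ N₁ N₂ n| ≤ γl / Δ * Real.exp (-ϑ * Δ) := by
  classical
  have hη' : (0:ℝ) < 1 - η := by linarith
  set c : ℝ := υ * (1 - η)^2 with hcdef
  have hcpos : 0 < c := mul_pos hυ (pow_pos hη' 2)
  have hℓ0 : (0:ℝ) < ℓ := by linarith
  have hN₂R : (0:ℝ) < N₂ := by exact_mod_cast hN₂
  have hlog2 : 0 < Real.log 2 := Real.log_pos (by norm_num)
  have hlog20 : 0 < Real.log 20 := Real.log_pos (by norm_num)
  have hlogd : 0 < Real.log 2 / υ := div_pos hlog2 hυ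
  have hgapl : ∀ a b : ℕ, 1 ≤ a → a ≤ b → υ * ((b:ℝ)^2 - (a:ℝ)^2) ≤ lam b - lam a :=
    fun a b ha hab => (hgap a b ha hab).1
  refine ⟨max 1 ⌈(1+ϑ)/c⌉₊, Δs + Real.log 2 / υ + Real.log 20, by linarith,
    5*ℓ*N₂, ℓ^2*N₂, mul_pos (mul_pos (by norm_num) hℓ0) hN₂R,
    mul_pos (pow_pos hℓ0 2) hN₂R, ?_⟩
  intro N₁ hN₁ Δ hΔ n hn hnfl
  have hN₁1 : 1 ≤ N₁ := le_trans (le_max_left _ _) hN₁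
  have hN₁R : (1:ℝ) ≤ N₁ := by exact_mod_cast hN₁1
  have hΔ0 : (0:ℝ) < Δ := by linarith
  have hq : Real.exp (-(υ * Δ)) ≤ 1/2 := by
    have hΔlog : Real.log 2 / υ ≤ Δ := by linarith
    rw [div_le_iff₀ hυ] at hΔlog
    calc Real.exp (-(υ*Δ)) ≤ Real.exp (-Real.log 2) :=
          Real.exp_le_exp.mpr (by nlinarith)
      _ = 1/2 := by
          rw [Real.exp_neg, Real.exp_log (by norm_num : (0:ℝ) < 2)]
          norm_num
  have h20 : Real.exp (-Δ) ≤ 1/20 := by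
    calc Real.exp (-Δ) ≤ Real.exp (-Real.log 20) :=
          Real.exp_le_exp.mpr (by linarith)
      _ = 1/20 := by
          rw [Real.exp_neg, Real.exp_log (by norm_num : (0:ℝ) < 20)]
          norm_num
  have hnfl' : (n:ℝ) ≤ η * N₁ :=
    le_trans (Nat.cast_le.mpr hnfl) (Nat.floor_le (by positivity))
  have hnN₁R : (n:ℝ) < N₁ := lt_of_le_of_lt hnfl' (by nlinarith)
  have hnN₁ : n < N₁ := by exact_mod_cast hnN₁R
  have hMR : ((N₁ - n : ℕ):ℝ) = (N₁:ℝ) - n := Nat.cast_sub hnN₁.le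
  have hceil : ((1+ϑ)/c : ℝ) ≤ (N₁:ℝ) :=
    le_trans (Nat.le_ceil _)
      (Nat.cast_le.mpr (le_trans (le_max_right _ _) hN₁))
  have hcN₁ : 1 + ϑ ≤ c * N₁ := by
    rw [div_le_iff₀ hcpos] at hceil; linarith
  have hexp : (N₁:ℝ) + ϑ ≤ υ * ((N₁ - n : ℕ):ℝ)^2 := by
    rw [hMR]
    have hNn : (0:ℝ) ≤ (N₁:ℝ) := by linarith
    have h1 : (1-η) * N₁ ≤ (N₁:ℝ) - n := by
      have hring : (1-η) * (N₁:ℝ) = N₁ - η * N₁ := by ring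
      linarith [hnfl']
    have h2 : ((1-η)*(N₁:ℝ))^2 ≤ ((N₁:ℝ)-(n:ℝ))^2 :=
      pow_le_pow_left₀ (mul_nonneg hη'.le hNn) h1 2
    have h3 : υ*((1-η)*(N₁:ℝ))^2 ≤ υ*((N₁:ℝ)-n)^2 := mul_le_mul_of_nonneg_left h2 hυ.le
    have h4 : (1+ϑ)*(N₁:ℝ) ≤ c*(N₁:ℝ)*(N₁:ℝ) := mul_le_mul_of_nonneg_right hcN₁ hNn
    have h5 : (N₁:ℝ) + ϑ ≤ (1+ϑ)*(N₁:ℝ) := by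
      have h5' := mul_le_mul_of_nonneg_left hN₁R hϑ.le
      have hring : (1+ϑ)*(N₁:ℝ) = N₁ + ϑ * N₁ := by ring
      linarith
    have h6 : c*(N₁:ℝ)*(N₁:ℝ) = υ*((1-η)*(N₁:ℝ))^2 := by rw [hcdef]; ring
    linarith [h3, h4, h5, h6.le, h6.ge]
  have hLag2 : ∀ m, N₁ + 1 ≤ m →
      (Lag lam Δ N₁ n (phi lam Δ m))^2 ≤ (1/5:ℝ)^N₁ * Real.exp (-ϑ*Δ) :=
    fun m hm => lag_sq_bound' hΔ0 hυ hq h20 hgapl hn hnN₁ hm hexp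
  have hφnpos : 0 < phi lam Δ n := phi_pos' lam Δ n
  have hdist : ∀ m, N₁ + 1 ≤ m → |phi lam Δ m - phi lam Δ n| ≤ phi lam Δ n := by
    intro m hm
    have h1 := phi_half' hΔ0 hυ hn (show n < m by omega) (hgapl n m hn (by omega)) hq
    rw [abs_of_nonpos (by linarith)]
    linarith [phi_pos' lam Δ m]
  have hLagD : |LagD lam Δ N₁ n| ≤ 2 * N₁ / phi lam Δ n := by
    rw [LagD]
    have hterm : ∀ k ∈ (Finset.Icc 1 N₁).erase n,
        |1 / (phi lam Δ n - phi lam Δ k)| ≤ 2 / phi lam Δ n := by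
      intro k hk
      obtain ⟨hkn, hkIcc⟩ := Finset.mem_erase.mp hk
      obtain ⟨hk1, hkN₁⟩ := Finset.mem_Icc.mp hkIcc
      have hd : phi lam Δ n / 2 ≤ |phi lam Δ n - phi lam Δ k| := by
        rcases hkn.lt_or_gt with hlt | hgt
        · have hh := phi_half' hΔ0 hυ hk1 hlt (hgapl k n hk1 hlt.le) hq
          rw [abs_of_nonpos (by linarith [phi_pos' lam Δ k])]
          linarith [phi_pos' lam Δ n]
        · have hh := phi_half' hΔ0 hυ hn hgt (hgapl n k hn hgt.le) hq
          rw [abs_of_nonneg (by linarith [phi_pos' lam Δ n])]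
          linarith
      rw [abs_div, abs_one]
      calc 1 / |phi lam Δ n - phi lam Δ k| ≤ 1 / (phi lam Δ n / 2) :=
            one_div_le_one_div_of_le (by linarith) hd
        _ = 2 / phi lam Δ n := one_div_div _ _
    calc |∑ k ∈ (Finset.Icc 1 N₁).erase n, 1 / (phi lam Δ n - phi lam Δ k)|
        ≤ ∑ k ∈ (Finset.Icc 1 N₁).erase n, |1 / (phi lam Δ n - phi lam Δ k)| :=
          Finset.abs_sum_le_sum_abs _ _
      _ ≤ ∑ _k ∈ (Finset.Icc 1 N₁).erase n, 2 / phi lam Δ n := Finset.sum_le_sum hterm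
      _ = ((Finset.Icc 1 N₁).erase n).card * (2 / phi lam Δ n) := by
          rw [Finset.sum_const, nsmul_eq_mul]
      _ ≤ N₁ * (2 / phi lam Δ n) := by
          apply mul_le_mul_of_nonneg_right _ (by positivity)
          have hcard : ((Finset.Icc 1 N₁).erase n).card ≤ N₁ := by
            calc ((Finset.Icc 1 N₁).erase n).card ≤ (Finset.Icc 1 N₁).card :=
                  Finset.card_le_card (Finset.erase_subset _ _)
              _ = N₁ := by rw [Nat.card_Icc]; omega
          exact_mod_cast hcard
      _ = 2 * N₁ / phi lam Δ n := by ring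
  have hHfac : ∀ m, N₁ + 1 ≤ m →
      |1 - 2 * (phi lam Δ m - phi lam Δ n) * LagD lam Δ N₁ n| ≤ 5 * N₁ := by
    intro m hm
    have hX : |2 * (phi lam Δ m - phi lam Δ n) * LagD lam Δ N₁ n| ≤ 4 * N₁ := by
      rw [abs_mul, abs_mul, abs_two]
      calc 2 * |phi lam Δ m - phi lam Δ n| * |LagD lam Δ N₁ n|
          ≤ 2 * phi lam Δ n * (2 * N₁ / phi lam Δ n) := by
            apply mul_le_mul _ hLagD (abs_nonneg _) (by positivity)
            exact mul_le_mul_of_nonneg_left (hdist m hm) (by norm_num)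
        _ = 4 * N₁ := by
            field_simp
            ring
    calc |1 - 2 * (phi lam Δ m - phi lam Δ n) * LagD lam Δ N₁ n|
        ≤ |1| + |2 * (phi lam Δ m - phi lam Δ n) * LagD lam Δ N₁ n| := abs_sub _ _
      _ ≤ 1 + 4 * N₁ := by rw [abs_one]; linarith
      _ ≤ 5 * N₁ := by linarith
  have h5 : (N₁:ℝ) * (1/5:ℝ)^N₁ ≤ 1 := by
    have hlt : (N₁:ℝ) ≤ 5^N₁ := by
      exact_mod_cast (Nat.lt_pow_self (by norm_num : 1 < 5) : N₁ < 5 ^ N₁).le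
    have h5p : (0:ℝ) < 5^N₁ := by positivity
    rw [div_pow, one_pow, mul_one_div, div_le_one h5p]
    exact hlt
  have hEpos := Real.exp_pos (-ϑ*Δ)
  -- Ky bound
  have hKy : |Ky lam y Δ N₁ N₂ n| ≤ 5*ℓ*N₂ * Real.exp (-ϑ*Δ) := by
    rw [Ky]
    have hterm : ∀ m ∈ Finset.Icc (N₁+1) (N₁+N₂),
        |y m * HermH lam Δ N₁ n (phi lam Δ m)| ≤ 5 * ℓ * Real.exp (-ϑ*Δ) := by
      intro m hm
      obtain ⟨hm1, hm2⟩ := Finset.mem_Icc.mp hm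
      have hym : |y m| ≤ ℓ := (hy m (by omega)).2
      have hH : |HermH lam Δ N₁ n (phi lam Δ m)|
          ≤ 5*N₁ * ((1/5:ℝ)^N₁ * Real.exp (-ϑ*Δ)) := by
        rw [HermH, abs_mul, abs_sq]
        exact mul_le_mul (hHfac m hm1) (hLag2 m hm1) (sq_nonneg _) (by positivity)
      calc |y m * HermH lam Δ N₁ n (phi lam Δ m)|
          = |y m| * |HermH lam Δ N₁ n (phi lam Δ m)| := abs_mul _ _
        _ ≤ ℓ * (5*N₁ * ((1/5:ℝ)^N₁ * Real.exp (-ϑ*Δ))) :=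
            mul_le_mul hym hH (abs_nonneg _) hℓ0.le
        _ ≤ 5 * ℓ * Real.exp (-ϑ*Δ) := by
            have hint := mul_le_mul_of_nonneg_left h5
              (by positivity : (0:ℝ) ≤ 5 * ℓ * Real.exp (-ϑ*Δ))
            nlinarith [hint]
    calc |∑ m ∈ Finset.Icc (N₁+1) (N₁+N₂), y m * HermH lam Δ N₁ n (phi lam Δ m)|
        ≤ ∑ m ∈ Finset.Icc (N₁+1) (N₁+N₂), |y m * HermH lam Δ N₁ n (phi lam Δ m)| :=
          Finset.abs_sum_le_sum_abs _ _
      _ ≤ ∑ _m ∈ Finset.Icc (N₁+1) (N₁+N₂), 5*ℓ*Real.exp (-ϑ*Δ) := Finset.sum_le_sum hterm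
      _ = (N₂:ℝ) * (5*ℓ*Real.exp (-ϑ*Δ)) := by
          rw [Finset.sum_const, nsmul_eq_mul, Nat.card_Icc,
            show N₁ + N₂ + 1 - (N₁+1) = N₂ from by omega]
      _ = 5*ℓ*N₂ * Real.exp (-ϑ*Δ) := by ring
  refine ⟨hKy, ?_⟩
  -- Kl bound
  have hyn := hy n hn
  have hynpos : 0 < |y n| := lt_of_lt_of_le (by positivity) hyn.1
  have hKlsum : |∑ m ∈ Finset.Icc (N₁+1) (N₁+N₂), y m * HermHt lam Δ N₁ n (phi lam Δ m)|
      ≤ (N₂:ℝ) * (ℓ * phi lam Δ n * Real.exp (-ϑ*Δ)) := by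
    have hterm2 : ∀ m ∈ Finset.Icc (N₁+1) (N₁+N₂),
        |y m * HermHt lam Δ N₁ n (phi lam Δ m)| ≤ ℓ * phi lam Δ n * Real.exp (-ϑ*Δ) := by
      intro m hm
      obtain ⟨hm1, hm2⟩ := Finset.mem_Icc.mp hm
      have hym : |y m| ≤ ℓ := (hy m (by omega)).2
      have h15 : (1/5:ℝ)^N₁ ≤ 1 := pow_le_one₀ (by norm_num) (by norm_num)
      have hHt : |HermHt lam Δ N₁ n (phi lam Δ m)| ≤ phi lam Δ n * Real.exp (-ϑ*Δ) := by
        rw [HermHt, abs_mul, abs_sq]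
        calc |phi lam Δ m - phi lam Δ n| * (Lag lam Δ N₁ n (phi lam Δ m))^2
            ≤ phi lam Δ n * ((1/5:ℝ)^N₁ * Real.exp (-ϑ*Δ)) :=
              mul_le_mul (hdist m hm1) (hLag2 m hm1) (sq_nonneg _) hφnpos.le
          _ ≤ phi lam Δ n * Real.exp (-ϑ*Δ) := by
              nlinarith [mul_le_mul_of_nonneg_left h15
                (mul_nonneg hφnpos.le hEpos.le)]
      calc |y m * HermHt lam Δ N₁ n (phi lam Δ m)|
          = |y m| * |HermHt lam Δ N₁ n (phi lam Δ m)| := abs_mul _ _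
        _ ≤ ℓ * (phi lam Δ n * Real.exp (-ϑ*Δ)) :=
            mul_le_mul hym hHt (abs_nonneg _) hℓ0.le
        _ = ℓ * phi lam Δ n * Real.exp (-ϑ*Δ) := by ring
    calc |∑ m ∈ Finset.Icc (N₁+1) (N₁+N₂), y m * HermHt lam Δ N₁ n (phi lam Δ m)|
        ≤ ∑ m ∈ Finset.Icc (N₁+1) (N₁+N₂), |y m * HermHt lam Δ N₁ n (phi lam Δ m)| :=
          Finset.abs_sum_le_sum_abs _ _
      _ ≤ ∑ _m ∈ Finset.Icc (N₁+1) (N₁+N₂), ℓ * phi lam Δ n * Real.exp (-ϑ*Δ) :=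
          Finset.sum_le_sum hterm2
      _ = (N₂:ℝ) * (ℓ * phi lam Δ n * Real.exp (-ϑ*Δ)) := by
          rw [Finset.sum_const, nsmul_eq_mul, Nat.card_Icc,
            show N₁ + N₂ + 1 - (N₁+1) = N₂ from by omega]
  rw [Kl, abs_mul, abs_neg, abs_inv]
  have habsden : |Δ * y n * phi lam Δ n| = Δ * |y n| * phi lam Δ n := by
    rw [abs_mul, abs_mul, abs_of_pos hΔ0, abs_of_pos hφnpos]
  rw [habsden]
  have h1 : 1 ≤ ℓ * |y n| := by
    have h2 := mul_le_mul_of_nonneg_left hyn.1 hℓ0.le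
    rwa [mul_inv_cancel₀ hℓ0.ne'] at h2
  calc (Δ * |y n| * phi lam Δ n)⁻¹
        * |∑ m ∈ Finset.Icc (N₁+1) (N₁+N₂), y m * HermHt lam Δ N₁ n (phi lam Δ m)|
      ≤ (Δ * |y n| * phi lam Δ n)⁻¹ * ((N₂:ℝ) * (ℓ * phi lam Δ n * Real.exp (-ϑ*Δ))) :=
        mul_le_mul_of_nonneg_left hKlsum (inv_nonneg.mpr (by positivity))
    _ = (N₂:ℝ) * ℓ * Real.exp (-ϑ*Δ) / (Δ * |y n|) := by
        field_simp
    _ ≤ ℓ^2*N₂ / Δ * Real.exp (-ϑ*Δ) := by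
        rw [div_le_iff₀ (by positivity)]
        have heq2 : ℓ^2*N₂/Δ * Real.exp (-ϑ*Δ) * (Δ * |y n|)
            = ℓ^2*(N₂:ℝ)*Real.exp (-ϑ*Δ)*|y n| := by
          field_simp
        rw [heq2]
        nlinarith [h1, mul_pos (mul_pos hN₂R hℓ0) hEpos]
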